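/- Concatenation formula for iterated integrals: if α : I_n → G and β : I_m → G are path maps with α(n) = β(0), then ∫_{α⋆β} ω_1···ω_r = Σ_{i=0}^{r} (∫_α ω_1···ω_i)(∫_β ω_{i+1}···ω_r), where the empty integral (i=0 or i=r factor with no forms) equals 1. -/

import Mathlib

open Finset

attribute [local instance] Classical.propDecidable

/-- A digraph: vertex type `V`, arrow relation without self-loops. -/
structure Digraph' (V : Type*) where
  Arrow : V → V → Prop
  irrefl : ∀ v, ¬ Arrow v v

/-- A step of a path map: an arrow `a → b` traversed forward, an arrow `a → b`
traversed backward (from `b` to `a`), or a trivial arrow at a vertex. -/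
inductive PStep (V : Type*) where
  | fwd : V → V → PStep V
  | bwd : V → V → PStep V
  | triv : V → PStep V

namespace PStep
variable {V : Type*}

def src : PStep V → V
  | fwd a _ => a
  | bwd _ b => b
  | triv a => a

def tgt : PStep V → V
  | fwd _ b => b
  | bwd a _ => a
  | triv a => a

/-- The step uses an actual arrow of `G` (or is trivial). -/
def ok (G : Digraph' V) : PStep V → Prop
  | fwd a b => G.Arrow a b
  | bwd a b => G.Arrow a b
  | triv _ => True

/-- The inverse step. -/
def inv : PStep V → PStep V
  | fwd a b => bwd a b
  | bwd a b => fwd a b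
  | triv a => triv a

/-- Pairing `⟨ω, s⟩` of a 1-form with a step: `ω(a)` forward, `-ω(a)` backward,
`0` on trivial arrows. -/
def pair {K : Type*} [Field K] (ω : V → V → K) : PStep V → K
  | fwd a b => ω a b
  | bwd a b => - ω a b
  | triv _ => 0

end PStep

/-- `σ 1, …, σ n` are the steps of a path map `I_n → G`. -/
def IsPathMap {V : Type*} (G : Digraph' V) (n : ℕ) (σ : ℕ → PStep V) : Prop :=
  (∀ t, 1 ≤ t → t ≤ n → (σ t).ok G) ∧
  (∀ t, 1 ≤ t → t < n → (σ t).tgt = (σ (t + 1)).src)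

/-- Volume number of a finite sequence: product of factorials of multiplicities. -/
def volFin {r : ℕ} (g : Fin r → ℕ) : ℕ :=
  ∏ k ∈ Finset.image g Finset.univ,
    Nat.factorial ((Finset.univ.filter (fun j => g j = k)).card)

/-- The iterated integral `∫_α ω_1 ⋯ ω_r` along a path map of length `n`
with steps `σ 1, …, σ n`. -/
noncomputable def iint (K : Type*) [Field K] {V : Type*} (n : ℕ) (σ : ℕ → PStep V)
    (r : ℕ) (ω : Fin r → V → V → K) : K :=
  ∑ f ∈ Finset.univ.filter (fun f : Fin r → Fin n => Monotone f),
    (∏ i, PStep.pair (ω i) (σ ((f i : ℕ) + 1))) / (volFin (fun i => (f i : ℕ)) : K)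

/-- Concatenation of step sequences: the first `n` steps from `σ`, then steps of `τ`. -/
def concatP {V : Type*} (n : ℕ) (σ τ : ℕ → PStep V) : ℕ → PStep V :=
  fun t => if t ≤ n then σ t else τ (t - n)

/-- The inverse path map of a path map of length `n`. -/
def invP {V : Type*} (n : ℕ) (σ : ℕ → PStep V) : ℕ → PStep V :=
  fun t => (σ (n + 1 - t)).inv

/-- Multiplicity of the value `k` in the (1-indexed) sequence `t 1, …, t r`. -/
def multN (t : ℕ → ℕ) (r k : ℕ) : ℕ := ((Finset.Icc 1 r).filter (fun j => t j = k)).card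

/-- Volume number of the sequence `t 1, …, t r`: the product over all `k` of
the factorial of the multiplicity of `k`. -/
noncomputable def volN (t : ℕ → ℕ) (r : ℕ) : ℕ := ∏ᶠ k, Nat.factorial (multN t r k)


section ConcatHelpers

lemma card_filter_lt_fin (r v : ℕ) (hv : v ≤ r) :
    (Finset.univ.filter (fun k : Fin r => (k : ℕ) < v)).card = v := by
  have : (Finset.univ.filter (fun k : Fin r => (k : ℕ) < v)).card
      = (Finset.univ : Finset (Fin v)).card :=
    Finset.card_bij'
      (fun k hk => (⟨(k : ℕ), (Finset.mem_filter.mp hk).2⟩ : Fin v))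
      (fun k _ => (⟨(k : ℕ), lt_of_lt_of_le k.2 hv⟩ : Fin r))
      (fun a ha => Finset.mem_univ _)
      (fun a ha => Finset.mem_filter.mpr ⟨Finset.mem_univ _, a.2⟩)
      (fun a ha => Fin.ext rfl) (fun a ha => Fin.ext rfl)
  simp [this]

lemma prod_split {M : Type*} [CommMonoid M] {r : ℕ} (i : ℕ) (hir : i ≤ r) (c : Fin r → M) :
    ∏ j, c j = (∏ j : Fin i, c ⟨j, lt_of_lt_of_le j.2 hir⟩) *
      ∏ j : Fin (r - i), c ⟨i + j, by have := j.2; omega⟩ := by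
  have e : i + (r - i) = r := by omega
  rw [← Fin.prod_congr' c e, Fin.prod_univ_add]
  congr 1
lemma volFin_split {r : ℕ} (i n : ℕ) (hir : i ≤ r) (c : Fin r → ℕ)
    (hc : ∀ j : Fin r, ((j : ℕ) < i ↔ c j < n)) :
    volFin c = volFin (fun j : Fin i => c ⟨j, lt_of_lt_of_le j.2 hir⟩) *
      volFin (fun j : Fin (r - i) => c ⟨i + j, by have := j.2; omega⟩ - n) := by
  classical
  have hge : ∀ j : Fin r, i ≤ (j : ℕ) → n ≤ c j := by
    intro j hj
    by_contra h
    have := (hc j).mpr (by omega)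
    omega
  have hlt : ∀ j : Fin i, c ⟨(j : ℕ), lt_of_lt_of_le j.2 hir⟩ < n := by
    intro j
    exact (hc _).mp j.2
  have hmkeq : ∀ (j : Fin r) (h : i + ((j : ℕ) - i) < r), i ≤ (j : ℕ) →
      c ⟨i + ((j : ℕ) - i), h⟩ = c j := by
    intro j h hj
    congr 1
    exact Fin.ext (by simp; omega)
  unfold volFin
  have himg : Finset.image c Finset.univ =
      Finset.image (fun j : Fin i => c ⟨j, lt_of_lt_of_le j.2 hir⟩) Finset.univ ∪
      Finset.image (fun x => n + x)
        (Finset.image (fun j : Fin (r - i) => c ⟨i + j, by have := j.2; omega⟩ - n)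
          Finset.univ) := by
    ext k
    simp only [Finset.mem_union, Finset.mem_image, Finset.mem_univ, true_and,
      exists_exists_eq_and]
    constructor
    · rintro ⟨j, rfl⟩
      by_cases hj : (j : ℕ) < i
      · exact Or.inl ⟨⟨(j : ℕ), hj⟩, rfl⟩
      · refine Or.inr ⟨⟨(j : ℕ) - i, by have := j.2; omega⟩, ?_⟩
        have h2 := hmkeq j (by have := j.2; omega) (by omega)
        have h3 := hge j (by omega)
        simp only [h2]
        omega
    · rintro (⟨j, rfl⟩ | ⟨j, rfl⟩)
      · exact ⟨_, rfl⟩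
      · refine ⟨⟨i + (j : ℕ), by have := j.2; omega⟩, ?_⟩
        have := hge ⟨i + (j : ℕ), by have := j.2; omega⟩ (by simp)
        omega
  have hd : Disjoint
      (Finset.image (fun j : Fin i => c ⟨j, lt_of_lt_of_le j.2 hir⟩) Finset.univ)
      (Finset.image (fun x => n + x)
        (Finset.image (fun j : Fin (r - i) => c ⟨i + j, by have := j.2; omega⟩ - n)
          Finset.univ)) := by
    rw [Finset.disjoint_left]
    rintro k hk1 hk2
    simp only [Finset.mem_image, Finset.mem_univ, true_and, exists_exists_eq_and] at hk1 hk2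
    obtain ⟨j, rfl⟩ := hk1
    obtain ⟨x, hx⟩ := hk2
    have := hlt j
    omega
  rw [himg, Finset.prod_union hd]
  congr 1
  · refine Finset.prod_congr rfl fun k hk => ?_
    simp only [Finset.mem_image, Finset.mem_univ, true_and] at hk
    obtain ⟨j0, rfl⟩ := hk
    have hkn := hlt j0
    congr 1
    refine Finset.card_bij'
      (fun a ha => (⟨(a : ℕ), (hc a).mpr (by
        have := (Finset.mem_filter.mp ha).2; omega)⟩ : Fin i))
      (fun a _ => (⟨(a : ℕ), lt_of_lt_of_le a.2 hir⟩ : Fin r)) ?_ ?_ ?_ ?_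
    · intro a ha
      refine Finset.mem_filter.mpr ⟨Finset.mem_univ _, ?_⟩
      have := (Finset.mem_filter.mp ha).2
      simpa using this
    · intro a ha
      refine Finset.mem_filter.mpr ⟨Finset.mem_univ _, ?_⟩
      have := (Finset.mem_filter.mp ha).2
      simpa using this
    · intro a ha; exact Fin.ext rfl
    · intro a ha; exact Fin.ext rfl
  · rw [Finset.prod_image (by intro a _ b _ h; have h' : n + a = n + b := h; omega)]
    refine Finset.prod_congr rfl fun x hx => ?_
    congr 1
    refine Finset.card_bij'
      (fun a ha => (⟨(a : ℕ) - i, by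
        have h1 := (Finset.mem_filter.mp ha).2
        have h2 : ¬ ((a : ℕ) < i) := by
          intro h
          have := (hc a).mp h
          omega
        have := a.2; omega⟩ : Fin (r - i)))
      (fun a _ => (⟨i + (a : ℕ), by have := a.2; omega⟩ : Fin r)) ?_ ?_ ?_ ?_
    · intro a ha
      refine Finset.mem_filter.mpr ⟨Finset.mem_univ _, ?_⟩
      have h1 := (Finset.mem_filter.mp ha).2
      have h2 : ¬ ((a : ℕ) < i) := by
        intro h
        have := (hc a).mp h
        omega
      have h3 := hmkeq a (by have := a.2; omega) (by omega)
      simp only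
      omega
    · intro a ha
      refine Finset.mem_filter.mpr ⟨Finset.mem_univ _, ?_⟩
      have h1 := (Finset.mem_filter.mp ha).2
      have h4 := hge ⟨i + (a : ℕ), by have := a.2; omega⟩ (by simp)
      simp only at h1 ⊢
      omega
    · intro a ha
      apply Fin.ext
      simp only
      have h2 : ¬ ((a : ℕ) < i) := by
        intro h
        have h1 := (Finset.mem_filter.mp ha).2
        have := (hc a).mp h
        omega
      omega
    · intro a ha
      apply Fin.ext
      simp only
      omega

end ConcatHelpers

section ConcatBij
variable {n m r : ℕ}

/-- Index data for the concatenation bijection. -/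
abbrev CIdx (n m r : ℕ) :=
  Σ i : Fin (r + 1), (Fin (i : ℕ) → Fin n) × (Fin (r - (i : ℕ)) → Fin m)

def cF (p : CIdx n m r) : Fin r → Fin (n + m) := fun j =>
  if hj : (j : ℕ) < (p.1 : ℕ) then
    ⟨(p.2.1 ⟨j, hj⟩ : ℕ), by have := (p.2.1 ⟨j, hj⟩).2; omega⟩
  else
    have hj' : (j : ℕ) - (p.1 : ℕ) < r - (p.1 : ℕ) := by have := j.2; omega
    ⟨n + (p.2.2 ⟨(j : ℕ) - (p.1 : ℕ), hj'⟩ : ℕ),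
      by have := (p.2.2 ⟨(j : ℕ) - (p.1 : ℕ), hj'⟩).2; omega⟩

lemma cF_val_lt (p : CIdx n m r) (j : ℕ) (hjr : j < r) (hj : j < (p.1 : ℕ))
    (x : Fin (p.1 : ℕ)) (hx : (x : ℕ) = j) :
    (cF p ⟨j, hjr⟩ : ℕ) = (p.2.1 x : ℕ) := by
  simp only [cF, dif_pos hj]
  exact congrArg (fun y => (p.2.1 y : ℕ)) (Fin.ext (show j = (x : ℕ) by omega))

lemma cF_val_ge (p : CIdx n m r) (j : ℕ) (hjr : j < r) (hj : ¬ j < (p.1 : ℕ))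
    (x : Fin (r - (p.1 : ℕ))) (hx : (x : ℕ) = j - (p.1 : ℕ)) :
    (cF p ⟨j, hjr⟩ : ℕ) = n + (p.2.2 x : ℕ) := by
  simp only [cF, dif_neg hj]
  exact congrArg (fun y => n + (p.2.2 y : ℕ)) (Fin.ext (show j - (p.1 : ℕ) = (x : ℕ) by omega))

lemma cF_val_lt_fin (p : CIdx n m r) (j : Fin r) (hj : (j : ℕ) < (p.1 : ℕ))
    (x : Fin (p.1 : ℕ)) (hx : (x : ℕ) = (j : ℕ)) :
    (cF p j : ℕ) = (p.2.1 x : ℕ) := by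
  have h := cF_val_lt p (j : ℕ) j.2 hj x hx
  have e : (cF p ⟨(j : ℕ), j.2⟩ : ℕ) = (cF p j : ℕ) :=
    congrArg (fun y => (cF p y : ℕ)) (Fin.ext rfl)
  exact e.symm.trans h

lemma cF_val_ge_fin (p : CIdx n m r) (j : Fin r) (hj : ¬ (j : ℕ) < (p.1 : ℕ))
    (x : Fin (r - (p.1 : ℕ))) (hx : (x : ℕ) = (j : ℕ) - (p.1 : ℕ)) :
    (cF p j : ℕ) = n + (p.2.2 x : ℕ) := by
  have h := cF_val_ge p (j : ℕ) j.2 hj x hx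
  have e : (cF p ⟨(j : ℕ), j.2⟩ : ℕ) = (cF p j : ℕ) :=
    congrArg (fun y => (cF p y : ℕ)) (Fin.ext rfl)
  exact e.symm.trans h

lemma cF_lt_iff (p : CIdx n m r) (j : Fin r) :
    ((j : ℕ) < (p.1 : ℕ)) ↔ (cF p j : ℕ) < n := by
  constructor
  · intro hj
    have h := cF_val_lt_fin p j hj ⟨(j : ℕ), hj⟩ rfl
    rw [h]
    exact (p.2.1 _).2
  · intro h
    by_contra hj
    have h1 := cF_val_ge_fin p j hj ⟨(j : ℕ) - (p.1 : ℕ), by have := j.2; omega⟩ rfl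
    omega

lemma cF_monotone (p : CIdx n m r) (hg : Monotone p.2.1) (hh : Monotone p.2.2) :
    Monotone (cF p) := by
  intro j k hjk
  rw [Fin.le_def] at hjk ⊢
  by_cases hj : (j : ℕ) < (p.1 : ℕ)
  · by_cases hk : (k : ℕ) < (p.1 : ℕ)
    · have h1 := cF_val_lt_fin p j hj ⟨(j : ℕ), hj⟩ rfl
      have h2 := cF_val_lt_fin p k hk ⟨(k : ℕ), hk⟩ rfl
      rw [h1, h2]
      have := hg (a := ⟨(j : ℕ), hj⟩) (b := ⟨(k : ℕ), hk⟩) (Fin.mk_le_mk.mpr hjk)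
      rw [Fin.le_def] at this
      exact this
    · have h1 := cF_val_lt_fin p j hj ⟨(j : ℕ), hj⟩ rfl
      have h2 := cF_val_ge_fin p k hk ⟨(k : ℕ) - (p.1 : ℕ), by have := k.2; omega⟩ rfl
      have := (p.2.1 ⟨(j : ℕ), hj⟩).2
      omega
  · have hk : ¬ (k : ℕ) < (p.1 : ℕ) := by omega
    have h1 := cF_val_ge_fin p j hj ⟨(j : ℕ) - (p.1 : ℕ), by have := j.2; omega⟩ rfl
    have h2 := cF_val_ge_fin p k hk ⟨(k : ℕ) - (p.1 : ℕ), by have := k.2; omega⟩ rfl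
    have := hh (a := ⟨(j : ℕ) - (p.1 : ℕ), by have := j.2; omega⟩)
      (b := ⟨(k : ℕ) - (p.1 : ℕ), by have := k.2; omega⟩) (Fin.mk_le_mk.mpr (by omega))
    rw [Fin.le_def] at this
    omega

noncomputable def cIdxOf (n : ℕ) {s r : ℕ} (f : Fin r → Fin s) : ℕ :=
  (Finset.univ.filter (fun j : Fin r => (f j : ℕ) < n)).card

lemma cIdxOf_le (n : ℕ) {s r : ℕ} (f : Fin r → Fin s) : cIdxOf n f ≤ r :=
  le_trans (Finset.card_filter_le _ _) (by simp)

lemma cIdxOf_iff (n : ℕ) {s r : ℕ} (f : Fin r → Fin s) (hf : Monotone f) (j : Fin r) :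
    (j : ℕ) < cIdxOf n f ↔ (f j : ℕ) < n := by
  constructor
  · intro hj
    by_contra h
    have hsub : (Finset.univ.filter fun k : Fin r => (f k : ℕ) < n) ⊆
        Finset.univ.filter (fun k : Fin r => (k : ℕ) < (j : ℕ)) := by
      intro k hk
      simp only [Finset.mem_filter, Finset.mem_univ, true_and] at hk ⊢
      by_contra hk2
      have : f j ≤ f k := hf (by rw [Fin.le_def]; omega)
      rw [Fin.le_def] at this
      omega
    have hcard := Finset.card_le_card hsub
    rw [card_filter_lt_fin r (j : ℕ) j.2.le] at hcard
    unfold cIdxOf at hj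
    omega
  · intro hj
    have hsub : (Finset.univ.filter fun k : Fin r => (k : ℕ) ≤ (j : ℕ)) ⊆
        Finset.univ.filter (fun k : Fin r => (f k : ℕ) < n) := by
      intro k hk
      simp only [Finset.mem_filter, Finset.mem_univ, true_and] at hk ⊢
      have : f k ≤ f j := hf (by rw [Fin.le_def]; omega)
      rw [Fin.le_def] at this
      omega
    have hcard := Finset.card_le_card hsub
    have hcc : (Finset.univ.filter fun k : Fin r => (k : ℕ) ≤ (j : ℕ)).card = (j : ℕ) + 1 := by
      have he : (Finset.univ.filter fun k : Fin r => (k : ℕ) ≤ (j : ℕ))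
          = Finset.univ.filter (fun k : Fin r => (k : ℕ) < (j : ℕ) + 1) :=
        Finset.filter_congr (fun k _ => by simp [Nat.lt_succ_iff])
      rw [he]
      exact card_filter_lt_fin r ((j : ℕ) + 1) j.2
    unfold cIdxOf
    omega

noncomputable def cD (f : Fin r → Fin (n + m)) (hf : Monotone f) : CIdx n m r :=
  ⟨⟨cIdxOf n f, Nat.lt_succ_of_le (cIdxOf_le n f)⟩,
   fun j =>
     have hj : (j : ℕ) < cIdxOf n f := j.2
     ⟨(f ⟨(j : ℕ), lt_of_lt_of_le hj (cIdxOf_le n f)⟩ : ℕ),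
       (cIdxOf_iff n f hf _).mp hj⟩,
   fun j =>
     have hj : (j : ℕ) < r - cIdxOf n f := j.2
     have hle : cIdxOf n f ≤ r := cIdxOf_le n f
     have pf : cIdxOf n f + (j : ℕ) < r := by omega
     have hge : n ≤ (f ⟨cIdxOf n f + (j : ℕ), pf⟩ : ℕ) := by
       by_contra h
       have h2 : cIdxOf n f + (j : ℕ) < cIdxOf n f :=
         (cIdxOf_iff n f hf ⟨cIdxOf n f + (j : ℕ), pf⟩).mpr (by omega)
       omega
     ⟨(f ⟨cIdxOf n f + (j : ℕ), pf⟩ : ℕ) - n,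
       by have := (f ⟨cIdxOf n f + (j : ℕ), pf⟩).2; omega⟩⟩

lemma cD_g_val (f : Fin r → Fin (n + m)) (hf : Monotone f)
    (j : Fin ((cD f hf).1 : ℕ)) (j' : Fin r) (hj' : (j' : ℕ) = (j : ℕ)) :
    ((cD f hf).2.1 j : ℕ) = (f j' : ℕ) := by
  have hj : (j : ℕ) < cIdxOf n f := j.2
  have h0 : ((cD f hf).2.1 j : ℕ)
      = (f ⟨(j : ℕ), lt_of_lt_of_le hj (cIdxOf_le n f)⟩ : ℕ) := rfl
  rw [h0]
  exact congrArg (fun y => (f y : ℕ)) (Fin.ext hj'.symm)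

lemma cD_h_val (f : Fin r → Fin (n + m)) (hf : Monotone f)
    (j : Fin (r - ((cD f hf).1 : ℕ))) (j' : Fin r) (hj' : (j' : ℕ) = cIdxOf n f + (j : ℕ)) :
    ((cD f hf).2.2 j : ℕ) = (f j' : ℕ) - n := by
  have hj : (j : ℕ) < r - cIdxOf n f := j.2
  have hle : cIdxOf n f ≤ r := cIdxOf_le n f
  have pf : cIdxOf n f + (j : ℕ) < r := by omega
  have h0 : ((cD f hf).2.2 j : ℕ)
      = (f ⟨cIdxOf n f + (j : ℕ), pf⟩ : ℕ) - n := rfl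
  rw [h0]
  exact congrArg (fun y => (f y : ℕ) - n) (Fin.ext hj'.symm)

end ConcatBij

section ConcatInv
variable {n m r : ℕ}

lemma cIdxOf_cF (p : CIdx n m r) : cIdxOf n (cF p) = (p.1 : ℕ) := by
  unfold cIdxOf
  have he : (Finset.univ.filter fun j : Fin r => (cF p j : ℕ) < n)
      = Finset.univ.filter (fun j : Fin r => (j : ℕ) < (p.1 : ℕ)) :=
    Finset.filter_congr (fun j _ => (cF_lt_iff p j).symm)
  rw [he]
  exact card_filter_lt_fin r _ (by have := p.1.2; omega)

lemma cD_mono_g (f : Fin r → Fin (n + m)) (hf : Monotone f) : Monotone (cD f hf).2.1 := by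
  intro a b hab
  rw [Fin.le_def] at hab ⊢
  have ha : (a : ℕ) < cIdxOf n f := a.2
  have hb : (b : ℕ) < cIdxOf n f := b.2
  have hle := cIdxOf_le n f
  rw [cD_g_val f hf a ⟨(a : ℕ), by omega⟩ rfl, cD_g_val f hf b ⟨(b : ℕ), by omega⟩ rfl]
  have := hf (a := ⟨(a : ℕ), by omega⟩) (b := ⟨(b : ℕ), by omega⟩) (Fin.mk_le_mk.mpr hab)
  rw [Fin.le_def] at this
  exact this

lemma cD_mono_h (f : Fin r → Fin (n + m)) (hf : Monotone f) : Monotone (cD f hf).2.2 := by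
  intro a b hab
  rw [Fin.le_def] at hab ⊢
  have ha : (a : ℕ) < r - cIdxOf n f := a.2
  have hb : (b : ℕ) < r - cIdxOf n f := b.2
  have hle := cIdxOf_le n f
  rw [cD_h_val f hf a ⟨cIdxOf n f + (a : ℕ), by omega⟩ rfl,
    cD_h_val f hf b ⟨cIdxOf n f + (b : ℕ), by omega⟩ rfl]
  have := hf (a := ⟨cIdxOf n f + (a : ℕ), by omega⟩) (b := ⟨cIdxOf n f + (b : ℕ), by omega⟩)
    (Fin.mk_le_mk.mpr (by omega))
  rw [Fin.le_def] at this
  omega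

lemma cF_cD (f : Fin r → Fin (n + m)) (hf : Monotone f) : cF (cD f hf) = f := by
  funext j
  apply Fin.ext
  have hle := cIdxOf_le n f
  by_cases hj : (j : ℕ) < cIdxOf n f
  · have h1 := cF_val_lt_fin (cD f hf) j hj ⟨(j : ℕ), hj⟩ rfl
    rw [h1, cD_g_val f hf ⟨(j : ℕ), hj⟩ j rfl]
  · have hge : n ≤ (f j : ℕ) := by
      by_contra h
      have := (cIdxOf_iff n f hf j).mpr (by omega)
      omega
    have h1 := cF_val_ge_fin (cD f hf) j hj
      ⟨(j : ℕ) - cIdxOf n f, show (j : ℕ) - cIdxOf n f < r - cIdxOf n f by have := j.2; omega⟩ rfl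
    rw [h1, cD_h_val f hf
      ⟨(j : ℕ) - cIdxOf n f, show (j : ℕ) - cIdxOf n f < r - cIdxOf n f by have := j.2; omega⟩ j
      (show (j : ℕ) = cIdxOf n f + ((j : ℕ) - cIdxOf n f) by omega)]
    omega

lemma cIdx_ext (p q : CIdx n m r) (h1 : (p.1 : ℕ) = (q.1 : ℕ))
    (h2 : ∀ (j : ℕ) (hp : j < (p.1 : ℕ)) (hq : j < (q.1 : ℕ)),
      (p.2.1 ⟨j, hp⟩ : ℕ) = (q.2.1 ⟨j, hq⟩ : ℕ))
    (h3 : ∀ (j : ℕ) (hp : j < r - (p.1 : ℕ)) (hq : j < r - (q.1 : ℕ)),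
      (p.2.2 ⟨j, hp⟩ : ℕ) = (q.2.2 ⟨j, hq⟩ : ℕ)) : p = q := by
  obtain ⟨⟨i, hi⟩, g, h⟩ := p
  obtain ⟨⟨i', hi'⟩, g', h'⟩ := q
  simp only at h1 h2 h3
  subst h1
  refine Sigma.ext rfl (heq_of_eq ?_)
  refine Prod.ext ?_ ?_
  · funext j
    apply Fin.ext
    exact h2 (j : ℕ) j.2 j.2
  · funext j
    apply Fin.ext
    exact h3 (j : ℕ) j.2 j.2

lemma cD_cF (p : CIdx n m r) (hmono : Monotone (cF p)) : cD (cF p) hmono = p := by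
  have he : cIdxOf n (cF p) = (p.1 : ℕ) := cIdxOf_cF p
  refine cIdx_ext _ _ ?_ ?_ ?_
  · exact he
  · intro j hp hq
    have hjr : j < r := by have := p.1.2; omega
    rw [cD_g_val (cF p) hmono ⟨j, hp⟩ ⟨j, hjr⟩ rfl]
    exact cF_val_lt p j hjr hq ⟨j, hq⟩ rfl
  · intro j hp hq
    have hp' : j < r - cIdxOf n (cF p) := hp
    have hjr : cIdxOf n (cF p) + j < r := by omega
    rw [cD_h_val (cF p) hmono ⟨j, hp⟩ ⟨cIdxOf n (cF p) + j, hjr⟩ rfl]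
    have h4 := cF_val_ge p (cIdxOf n (cF p) + j) hjr (by omega) ⟨j, hq⟩
      (show j = (cIdxOf n (cF p) + j) - (p.1 : ℕ) by omega)
    omega

end ConcatInv
section ConcatTerm
variable {V : Type*}

lemma term_eq (K : Type*) [Field K] (n m r : ℕ) (σ τ : ℕ → PStep V)
    (ω : Fin r → V → V → K) (p : CIdx n m r) :
    (∏ j : Fin r, PStep.pair (ω j) (concatP n σ τ ((cF p j : ℕ) + 1))) /
        (volFin (fun j => (cF p j : ℕ)) : K) =
      ((∏ j, PStep.pair (ω (Fin.castLE (Nat.lt_succ_iff.mp p.1.isLt) j))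
          (σ ((p.2.1 j : ℕ) + 1))) / (volFin (fun j => (p.2.1 j : ℕ)) : K)) *
      ((∏ j : Fin (r - (p.1 : ℕ)), PStep.pair
          (ω ⟨(p.1 : ℕ) + (j : ℕ), by have := j.isLt; omega⟩)
          (τ ((p.2.2 j : ℕ) + 1))) / (volFin (fun j => (p.2.2 j : ℕ)) : K)) := by
  have hir : (p.1 : ℕ) ≤ r := by have := p.1.2; omega
  rw [div_mul_div_comm]
  congr 1
  · rw [prod_split (p.1 : ℕ) hir
      (fun j : Fin r => PStep.pair (ω j) (concatP n σ τ ((cF p j : ℕ) + 1)))]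
    congr 1
    · refine Finset.prod_congr rfl fun j _ => ?_
      rw [cF_val_lt p (j : ℕ) (lt_of_lt_of_le j.2 hir) j.2 j rfl]
      have hc : (p.2.1 j : ℕ) + 1 ≤ n := by have := (p.2.1 j).2; omega
      simp only [concatP]
      rw [if_pos hc]
      exact congrArg (fun v => PStep.pair (ω v) (σ ((p.2.1 j : ℕ) + 1))) (Fin.ext rfl)
    · refine Finset.prod_congr rfl fun j _ => ?_
      rw [cF_val_ge p ((p.1 : ℕ) + (j : ℕ)) (by have := j.2; omega) (by omega) j (by omega)]
      have hc : ¬ (n + (p.2.2 j : ℕ) + 1 ≤ n) := by omega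
      simp only [concatP]
      have harg : n + (p.2.2 j : ℕ) + 1 - n = (p.2.2 j : ℕ) + 1 := by omega
      rw [if_neg hc, harg]
  · rw [← Nat.cast_mul]
    congr 1
    rw [volFin_split (p.1 : ℕ) n hir _ (fun j => cF_lt_iff p j)]
    congr 1
    · exact congrArg volFin
        (funext fun j => cF_val_lt p (j : ℕ) (lt_of_lt_of_le j.2 hir) j.2 j rfl)
    · refine congrArg volFin (funext fun j => ?_)
      rw [cF_val_ge p ((p.1 : ℕ) + (j : ℕ)) (by have := j.2; omega) (by omega) j (by omega)]
      omega

end ConcatTerm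

/-- Concatenation formula:
`∫_{α⋆β} ω_1⋯ω_r = Σ_{i=0}^r (∫_α ω_1⋯ω_i)(∫_β ω_{i+1}⋯ω_r)`. -/
theorem stmt5 {V : Type*} (K : Type*) [Field K] [CharZero K] (G : Digraph' V)
    (n m : ℕ) (σ τ : ℕ → PStep V)
    (hσ : IsPathMap G n σ) (hτ : IsPathMap G m τ) (hjoin : (σ n).tgt = (τ 1).src)
    (r : ℕ) (ω : Fin r → V → V → K) :
    iint K (n + m) (concatP n σ τ) r ω =
      ∑ i : Fin (r + 1),
        iint K n σ i (fun j => ω (Fin.castLE (Nat.lt_succ_iff.mp i.isLt) j)) *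
        iint K m τ (r - i) (fun j => ω ⟨(i : ℕ) + (j : ℕ), by have := j.isLt; omega⟩) := by
  classical
  unfold iint
  simp only [Finset.sum_mul_sum]
  simp only [← Finset.sum_product']
  rw [Finset.sum_sigma']
  refine Eq.symm (Finset.sum_bij'
    (fun (p : CIdx n m r) (hp : p ∈ _) => cF p)
    (fun f hf => cD f (Finset.mem_filter.mp hf).2)
    ?_ ?_ ?_ ?_ ?_)
  · intro p hp
    obtain ⟨-, h2⟩ := Finset.mem_sigma.mp hp
    obtain ⟨hg, hh⟩ := Finset.mem_product.mp h2
    exact Finset.mem_filter.mpr ⟨Finset.mem_univ _,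
      cF_monotone p (Finset.mem_filter.mp hg).2 (Finset.mem_filter.mp hh).2⟩
  · intro f hf
    exact Finset.mem_sigma.mpr ⟨Finset.mem_univ _, Finset.mem_product.mpr
      ⟨Finset.mem_filter.mpr ⟨Finset.mem_univ _, cD_mono_g f _⟩,
       Finset.mem_filter.mpr ⟨Finset.mem_univ _, cD_mono_h f _⟩⟩⟩
  · intro p hp
    exact cD_cF p _
  · intro f hf
    exact cF_cD f _
  · intro p hp
    exact (term_eq K n m r σ τ ω p).symm
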